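/- Let f(x) = x(x-1)(x-λ) ∈ ℚ[λ][x] and define polynomials P_k by the seed P_0 = (1/2)·f' and the recurrence P_{k+1} = P_k'·f + (1/2 - k)·P_k·f' for k ≥ 0 (derivatives in x). Then for every k ≥ 0, the degree of P_k in x equals 2(k+1). -/
import Mathlib


open MvPolynomial

/-- `f(x) = x(x-1)(x-λ)`, with `X 0 = x` and `X 1 = λ`. -/
noncomputable def legendreF : MvPolynomial (Fin 2) ℚ :=
  X 0 * (X 0 - 1) * (X 0 - X 1)

/-- The basic inflection polynomials `P_k = P_{1,k}`. -/
noncomputable def inflP : ℕ → MvPolynomial (Fin 2) ℚ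
  | 0 => C (1/2 : ℚ) * pderiv 0 legendreF
  | k + 1 =>
      pderiv 0 (inflP k) * legendreF +
        C ((1/2 : ℚ) - (k : ℚ)) * (inflP k * pderiv 0 legendreF)

lemma phi_C' (a : ℚ) : finSuccEquiv ℚ 1 (C a) = Polynomial.C (C a) := by
  simp [finSuccEquiv_apply]

lemma phi_pderiv (p : MvPolynomial (Fin 2) ℚ) :
    finSuccEquiv ℚ 1 (pderiv 0 p) = Polynomial.derivative (finSuccEquiv ℚ 1 p) := by
  induction p using MvPolynomial.induction_on with
  | C a => simp [phi_C']
  | add p q hp hq => simp [hp, hq]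
  | mul_X p i hp =>
    induction i using Fin.cases with
    | zero => simp [pderiv_mul, hp, finSuccEquiv_X_zero]; ring
    | succ j =>
      have h0 : pderiv (0 : Fin 2) (X j.succ : MvPolynomial (Fin 2) ℚ) = 0 :=
        pderiv_X_of_ne (Fin.succ_ne_zero j)
      simp [pderiv_mul, hp, h0, finSuccEquiv_X_succ]; ring

noncomputable def Fp : Polynomial (MvPolynomial (Fin 1) ℚ) :=
  Polynomial.X * (Polynomial.X - 1) * (Polynomial.X - Polynomial.C (X 0))

lemma phi_legendreF : finSuccEquiv ℚ 1 legendreF = Fp := by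
  have h1 : finSuccEquiv ℚ 1 (X 1) = Polynomial.C (X 0) := finSuccEquiv_X_succ (j := 0)
  rw [legendreF, map_mul, map_mul, map_sub, map_sub, map_one, finSuccEquiv_X_zero, h1, Fp]

lemma Xsub1_monic : (Polynomial.X - 1 : Polynomial (MvPolynomial (Fin 1) ℚ)).Monic := by
  simpa using Polynomial.monic_X_sub_C (1 : MvPolynomial (Fin 1) ℚ)

lemma Fp_monic : Fp.Monic :=
  (Polynomial.monic_X.mul Xsub1_monic).mul (Polynomial.monic_X_sub_C _)

lemma Fp_natDegree : Fp.natDegree = 3 := by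
  have h1 : (Polynomial.X - 1 : Polynomial (MvPolynomial (Fin 1) ℚ))
      = Polynomial.X - Polynomial.C 1 := by simp
  rw [Fp, (Polynomial.monic_X.mul Xsub1_monic).natDegree_mul (Polynomial.monic_X_sub_C _),
    Polynomial.monic_X.natDegree_mul Xsub1_monic, h1,
    Polynomial.natDegree_X_sub_C, Polynomial.natDegree_X_sub_C, Polynomial.natDegree_X]

lemma deriv_info (p : Polynomial (MvPolynomial (Fin 1) ℚ)) (n : ℕ)
    (h : p.natDegree = n + 1) (h0 : p.leadingCoeff ≠ 0) :
    (Polynomial.derivative p).natDegree = n ∧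
      (Polynomial.derivative p).leadingCoeff = p.leadingCoeff * C ((n : ℚ) + 1) ∧
      Polynomial.derivative p ≠ 0 := by
  have hCn : (C ((n : ℚ) + 1) : MvPolynomial (Fin 1) ℚ) = ((n : ℕ) + 1 : ℕ) := by
    rw [map_add, map_one, map_natCast]; push_cast; ring
  have hc : (Polynomial.derivative p).coeff n = p.leadingCoeff * C ((n : ℚ) + 1) := by
    rw [Polynomial.coeff_derivative, Polynomial.leadingCoeff, h, hCn]
    push_cast
    ring
  have hne : p.leadingCoeff * C ((n : ℚ) + 1) ≠ 0 := by
    refine mul_ne_zero h0 ?_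
    simp only [ne_eq, MvPolynomial.C_eq_zero]
    positivity
  have hd0 : Polynomial.derivative p ≠ 0 := fun hz => hne (by rw [← hc, hz, Polynomial.coeff_zero])
  have hdeg : (Polynomial.derivative p).natDegree = n :=
    le_antisymm ((Polynomial.natDegree_derivative_le p).trans (by omega))
      (Polynomial.le_natDegree_of_ne_zero (by rw [hc]; exact hne))
  exact ⟨hdeg, by rw [Polynomial.leadingCoeff, hdeg, hc], hd0⟩

lemma dFp_natDegree : (Polynomial.derivative Fp).natDegree = 2 :=
  (deriv_info Fp 2 Fp_natDegree (by rw [Fp_monic]; exact one_ne_zero)).1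

lemma dFp_ne_zero : Polynomial.derivative Fp ≠ 0 :=
  (deriv_info Fp 2 Fp_natDegree (by rw [Fp_monic]; exact one_ne_zero)).2.2

lemma dFp_leadingCoeff : (Polynomial.derivative Fp).leadingCoeff = C 3 := by
  have := (deriv_info Fp 2 Fp_natDegree (by rw [Fp_monic]; exact one_ne_zero)).2.1
  rw [this, Fp_monic, one_mul]
  norm_num

noncomputable def lc : ℕ → ℚ
  | 0 => 3/2
  | k + 1 => lc k * ((7:ℚ)/2 - k)

lemma lc_ne_zero (k : ℕ) : lc k ≠ 0 := by
  induction k with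
  | zero => norm_num [lc]
  | succ k ih =>
    rw [lc]
    refine mul_ne_zero ih ?_
    intro h
    have h2 : (2:ℚ) * (k:ℚ) = 7 := by linarith
    have h3 : ((2 * k : ℕ) : ℚ) = ((7:ℕ):ℚ) := by push_cast; linarith
    have := Nat.cast_injective h3
    omega

lemma key (k : ℕ) :
    (finSuccEquiv ℚ 1 (inflP k)).natDegree = 2 * k + 2 ∧
    (finSuccEquiv ℚ 1 (inflP k)).leadingCoeff = C (lc k) := by
  induction k with
  | zero =>
    rw [inflP, map_mul, phi_C', phi_pderiv, phi_legendreF]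
    constructor
    · rw [Polynomial.natDegree_C_mul
        (by simp : (C (1/2:ℚ) : MvPolynomial (Fin 1) ℚ) ≠ 0), dFp_natDegree]
    · rw [Polynomial.leadingCoeff_mul, Polynomial.leadingCoeff_C, dFp_leadingCoeff,
        ← map_mul, lc]
      norm_num
  | succ k ih =>
    obtain ⟨hd, hl⟩ := ih
    set Q := finSuccEquiv ℚ 1 (inflP k) with hQ
    have hlc : (C (lc k) : MvPolynomial (Fin 1) ℚ) ≠ 0 := by
      simpa using lc_ne_zero k
    have hQlc : Q.leadingCoeff ≠ 0 := by rw [hl]; exact hlc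
    have hQ0 : Q ≠ 0 := fun h => hQlc (by rw [h, Polynomial.leadingCoeff_zero])
    obtain ⟨hdQ', hlQ', hdQ'0⟩ := deriv_info Q (2 * k + 1) hd hQlc
    have hFp0 : Fp ≠ 0 := Fp_monic.ne_zero
    -- the image of inflP (k+1)
    have himg : finSuccEquiv ℚ 1 (inflP (k + 1)) =
        Polynomial.derivative Q * Fp +
          Polynomial.C (C ((1/2 : ℚ) - (k : ℚ))) * (Q * Polynomial.derivative Fp) := by
      rw [inflP, map_add, map_mul, map_mul, map_mul, phi_pderiv, phi_pderiv,
        phi_legendreF, phi_C', ← hQ]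
    set A := Polynomial.derivative Q * Fp with hA
    set B := Polynomial.C (C ((1/2 : ℚ) - (k : ℚ))) * (Q * Polynomial.derivative Fp) with hB
    have hdA : A.natDegree = 2 * k + 4 := by
      rw [hA, Polynomial.natDegree_mul hdQ'0 hFp0, hdQ', Fp_natDegree]
    have hcA : A.coeff (2 * k + 4) = C (lc k * (2 * k + 2)) := by
      have := Polynomial.coeff_mul_degree_add_degree (Polynomial.derivative Q) Fp
      rw [hdQ', Fp_natDegree] at this
      rw [hA, show 2 * k + 4 = (2 * k + 1) + 3 by omega, this, hlQ', hl, Fp_monic,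
        mul_one, ← map_mul]
      push_cast
      ring_nf
    have hdQF : (Q * Polynomial.derivative Fp).natDegree = 2 * k + 4 := by
      rw [Polynomial.natDegree_mul hQ0 dFp_ne_zero, hd, dFp_natDegree]
    have hcB : B.coeff (2 * k + 4) = C (lc k * (3 * ((1:ℚ)/2 - k))) := by
      have h1 := Polynomial.coeff_mul_degree_add_degree Q (Polynomial.derivative Fp)
      rw [hd, dFp_natDegree] at h1
      rw [hB, Polynomial.coeff_C_mul, show 2 * k + 4 = (2 * k + 2) + 2 by omega, h1,
        hl, dFp_leadingCoeff, ← map_mul, ← map_mul]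
      push_cast
      ring_nf
    have hcsum : (A + B).coeff (2 * k + 4) = C (lc (k + 1)) := by
      rw [Polynomial.coeff_add, hcA, hcB, ← map_add, lc]
      push_cast
      ring_nf
    have hlcs : (C (lc (k+1)) : MvPolynomial (Fin 1) ℚ) ≠ 0 := by
      simpa using lc_ne_zero (k+1)
    have hdB : B.natDegree ≤ 2 * k + 4 := by
      rw [hB]
      exact (Polynomial.natDegree_C_mul_le _ _).trans (le_of_eq hdQF)
    have hdsum : (A + B).natDegree = 2 * k + 4 := by
      refine le_antisymm ((Polynomial.natDegree_add_le A B).trans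
        (max_le (le_of_eq hdA) hdB)) ?_
      exact Polynomial.le_natDegree_of_ne_zero (by rw [hcsum]; exact hlcs)
    constructor
    · rw [himg, hdsum]; ring
    · rw [himg, Polynomial.leadingCoeff, hdsum, hcsum]

theorem degree_x_inflP (k : ℕ) : degreeOf 0 (inflP k) = 2 * (k + 1) := by
  have := (key k).1
  rw [natDegree_finSuccEquiv] at this
  rw [this]; ring
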